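/- Let $W_L \in C^1(\mathbb{R}^d)$ be even with $\nabla W_L$ bounded, and suppose $x_i, v_i : [0,T] \to \mathbb{R}^d$, $i = 1,\dots,N$, are $C^1$ and satisfy $\dot x_i = v_i$, $\dot v_i = -(1-\alpha)(x_i - x_{d_i}) - \alpha(x_i - m(t)) - v_i + \frac{1}{N}\sum_j \nabla W_L(x_j - x_i)$, where $\alpha \in [0,1]$, $x_{d_i} \in \mathbb{R}^d$ are fixed, and $m : [0,T] \to \mathbb{R}^d$ is continuous with $|m(t)|^2 \le K$ for all $t$. Then there is a constant $C$, depending only on $T$, $K$, $\sup_i |x_{d_i}|$, $\|\nabla W_L\|_\infty$, $\inf W_L$, and the initial data, but not on $N$, such that $\frac{1}{N}\sum_{i=1}^N (|x_i(t)|^2 + |v_i(t)|^2) \le C$ for all $t \in [0,T]$. -/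

import Mathlib

open scoped RealInnerProductSpace BigOperators

set_option maxHeartbeats 1000000 in
/-- Uniform-in-`N` second moment bound for the controlled leader particle system. -/
theorem uniform_second_moment_bound (d : ℕ) (T K B mW D I0 : ℝ)
    (hT : 0 ≤ T) (hK : 0 ≤ K) :
    ∃ C : ℝ, ∀ (N : ℕ), 0 < N → ∀ α : ℝ, α ∈ Set.Icc (0 : ℝ) 1 →
      ∀ WL : EuclideanSpace ℝ (Fin d) → ℝ, ContDiff ℝ 1 WL →
        (∀ z, WL z = WL (-z)) → (∀ z, ‖gradient WL z‖ ≤ B) → (∀ z, -mW ≤ WL z) →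
      ∀ (x v : Fin N → ℝ → EuclideanSpace ℝ (Fin d))
        (xd : Fin N → EuclideanSpace ℝ (Fin d))
        (m : ℝ → EuclideanSpace ℝ (Fin d)),
        Continuous m → (∀ t, ‖m t‖ ^ 2 ≤ K) →
        (∀ i, ∀ t ∈ Set.Icc 0 T, HasDerivAt (x i) (v i t) t) →
        (∀ i, ∀ t ∈ Set.Icc 0 T, HasDerivAt (v i)
          (-(1 - α) • (x i t - xd i) - α • (x i t - m t) - v i t
            + (N : ℝ)⁻¹ • ∑ j, gradient WL (x j t - x i t)) t) →
        (∀ i, ‖xd i‖ ≤ D) →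
        ((N : ℝ)⁻¹ * ∑ i, (‖x i 0‖ ^ 2 + ‖v i 0‖ ^ 2) ≤ I0) →
        ∀ t ∈ Set.Icc 0 T, (N : ℝ)⁻¹ * ∑ i, (‖x i t‖ ^ 2 + ‖v i t‖ ^ 2) ≤ C := by
  classical
  set R : ℝ := max D 0 + Real.sqrt K + max B 0 with hRdef
  have hR0 : 0 ≤ R := by positivity
  refine ⟨Real.exp (5 * T) * (max I0 0) + (3 * R ^ 2) / 5 * (Real.exp (5 * T) - 1), ?_⟩
  intro N hN α hα WL hWL hWeven hWgrad hWlow x v xd m hmc hmK hx hv hxd hI0 t ht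
  have hN0 : (0 : ℝ) < (N : ℝ) := by exact_mod_cast hN
  -- acceleration
  set a : Fin N → ℝ → EuclideanSpace ℝ (Fin d) := fun i s =>
    -(1 - α) • (x i s - xd i) - α • (x i s - m s) - v i s
      + (N : ℝ)⁻¹ • ∑ j, gradient WL (x j s - x i s) with hadef
  set F : ℝ → ℝ := fun s => (N : ℝ)⁻¹ * ∑ i, (‖x i s‖ ^ 2 + ‖v i s‖ ^ 2) with hFdef
  set F' : ℝ → ℝ := fun s => (N : ℝ)⁻¹ * ∑ i,
      ((⟪x i s, v i s⟫ + ⟪v i s, x i s⟫) + (⟪v i s, a i s⟫ + ⟪a i s, v i s⟫)) with hF'def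
  have hF0 : ∀ s, 0 ≤ F s := by
    intro s
    apply mul_nonneg (by positivity)
    exact Finset.sum_nonneg fun i _ => by positivity
  -- derivative of F
  have hFderiv : ∀ s ∈ Set.Icc (0 : ℝ) T, HasDerivAt F (F' s) s := by
    intro s hs
    have : HasDerivAt (fun u => ∑ i, (⟪x i u, x i u⟫ + ⟪v i u, v i u⟫))
        (∑ i, ((⟪x i s, v i s⟫ + ⟪v i s, x i s⟫) + (⟪v i s, a i s⟫ + ⟪a i s, v i s⟫))) s := by
      refine HasDerivAt.fun_sum fun i _ => ?_
      exact ((hx i s hs).inner ℝ (hx i s hs)).add ((hv i s hs).inner ℝ (hv i s hs))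
    have h2 := this.const_mul ((N : ℝ)⁻¹)
    have heq : F = fun u => (N : ℝ)⁻¹ * ∑ i, (⟪x i u, x i u⟫ + ⟪v i u, v i u⟫) := by
      funext u
      simp only [hFdef, real_inner_self_eq_norm_sq]
    rw [heq]
    exact h2
  -- continuity of F on Icc
  have hFcont : ContinuousOn F (Set.Icc 0 T) := by
    refine continuousOn_const.mul (continuousOn_finset_sum _ fun i _ => ?_)
    have hcx : ContinuousOn (x i) (Set.Icc 0 T) := fun s hs =>
      ((hx i s hs).continuousAt).continuousWithinAt
    have hcv : ContinuousOn (v i) (Set.Icc 0 T) := fun s hs =>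
      ((hv i s hs).continuousAt).continuousWithinAt
    exact ((hcx.norm.pow 2).add (hcv.norm.pow 2))
  -- bound on the acceleration
  have hm : ∀ s, ‖m s‖ ≤ Real.sqrt K := by
    intro s
    have := hmK s
    have h := Real.sqrt_le_sqrt this
    rwa [Real.sqrt_sq (norm_nonneg _)] at h
  have hAbound : ∀ i s, ‖a i s‖ ≤ ‖x i s‖ + ‖v i s‖ + R := by
    intro i s
    have hα0 : 0 ≤ α := hα.1
    have hα1 : α ≤ 1 := hα.2
    have h1 : ‖(-(1 - α) • (x i s - xd i))‖ ≤ (1 - α) * (‖x i s‖ + max D 0) := by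
      rw [norm_smul, Real.norm_eq_abs, abs_neg, abs_of_nonneg (by linarith)]
      apply mul_le_mul_of_nonneg_left _ (by linarith)
      calc ‖x i s - xd i‖ ≤ ‖x i s‖ + ‖xd i‖ := norm_sub_le _ _
        _ ≤ ‖x i s‖ + max D 0 := by
            have := hxd i; gcongr; exact le_max_of_le_left this
    have h2 : ‖α • (x i s - m s)‖ ≤ α * (‖x i s‖ + Real.sqrt K) := by
      rw [norm_smul, Real.norm_eq_abs, abs_of_nonneg hα0]
      apply mul_le_mul_of_nonneg_left _ hα0
      calc ‖x i s - m s‖ ≤ ‖x i s‖ + ‖m s‖ := norm_sub_le _ _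
        _ ≤ ‖x i s‖ + Real.sqrt K := by gcongr; exact hm s
    have h3 : ‖(N : ℝ)⁻¹ • ∑ j, gradient WL (x j s - x i s)‖ ≤ max B 0 := by
      rw [norm_smul, Real.norm_eq_abs, abs_of_nonneg (le_of_lt (inv_pos.mpr hN0))]
      have hsum : ‖∑ j, gradient WL (x j s - x i s)‖ ≤ (N : ℝ) * max B 0 := by
        calc ‖∑ j, gradient WL (x j s - x i s)‖ ≤ ∑ j : Fin N, ‖gradient WL (x j s - x i s)‖ :=
              norm_sum_le _ _
          _ ≤ ∑ j : Fin N, max B 0 :=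
              Finset.sum_le_sum fun j _ => le_max_of_le_left (hWgrad _)
          _ = (N : ℝ) * max B 0 := by simp [mul_comm]
      calc (N : ℝ)⁻¹ * ‖∑ j, gradient WL (x j s - x i s)‖
          ≤ (N : ℝ)⁻¹ * ((N : ℝ) * max B 0) := by
            apply mul_le_mul_of_nonneg_left hsum (le_of_lt (inv_pos.mpr hN0))
        _ = max B 0 := by field_simp
    have htri : ‖a i s‖ ≤ ‖(-(1 - α) • (x i s - xd i))‖ + ‖α • (x i s - m s)‖ + ‖v i s‖
        + ‖(N : ℝ)⁻¹ • ∑ j, gradient WL (x j s - x i s)‖ := by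
      rw [hadef]
      calc ‖-(1 - α) • (x i s - xd i) - α • (x i s - m s) - v i s
            + (N : ℝ)⁻¹ • ∑ j, gradient WL (x j s - x i s)‖
          ≤ ‖-(1 - α) • (x i s - xd i) - α • (x i s - m s) - v i s‖
            + ‖(N : ℝ)⁻¹ • ∑ j, gradient WL (x j s - x i s)‖ := norm_add_le _ _
        _ ≤ ‖-(1 - α) • (x i s - xd i) - α • (x i s - m s)‖ + ‖v i s‖
            + ‖(N : ℝ)⁻¹ • ∑ j, gradient WL (x j s - x i s)‖ := by
            gcongr; exact norm_sub_le _ _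
        _ ≤ ‖(-(1 - α) • (x i s - xd i))‖ + ‖α • (x i s - m s)‖ + ‖v i s‖
            + ‖(N : ℝ)⁻¹ • ∑ j, gradient WL (x j s - x i s)‖ := by
            gcongr; exact norm_sub_le _ _
    have hD0 : 0 ≤ max D 0 := le_max_right _ _
    have hsK : 0 ≤ Real.sqrt K := Real.sqrt_nonneg _
    have hB0 : 0 ≤ max B 0 := le_max_right _ _
    have hX : 0 ≤ ‖x i s‖ := norm_nonneg _
    nlinarith [htri, h1, h2, h3]
  -- derivative bound
  have hF'bound : ∀ s ∈ Set.Ico (0 : ℝ) T, ‖F' s‖ ≤ 5 * ‖F s‖ + 3 * R ^ 2 := by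
    intro s hs
    have hterm : ∀ i : Fin N,
        |(⟪x i s, v i s⟫ + ⟪v i s, x i s⟫) + (⟪v i s, a i s⟫ + ⟪a i s, v i s⟫)|
          ≤ 5 * (‖x i s‖ ^ 2 + ‖v i s‖ ^ 2) + 3 * R ^ 2 := by
      intro i
      have hC1 : |⟪x i s, v i s⟫| ≤ ‖x i s‖ * ‖v i s‖ := abs_real_inner_le_norm _ _
      have hC2 : |⟪v i s, x i s⟫| ≤ ‖v i s‖ * ‖x i s‖ := abs_real_inner_le_norm _ _
      have hC3 : |⟪v i s, a i s⟫| ≤ ‖v i s‖ * ‖a i s‖ := abs_real_inner_le_norm _ _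
      have hC4 : |⟪a i s, v i s⟫| ≤ ‖a i s‖ * ‖v i s‖ := abs_real_inner_le_norm _ _
      have hA := hAbound i s
      have hX : 0 ≤ ‖x i s‖ := norm_nonneg _
      have hV : 0 ≤ ‖v i s‖ := norm_nonneg _
      have hAn : 0 ≤ ‖a i s‖ := norm_nonneg _
      have habs : |(⟪x i s, v i s⟫ + ⟪v i s, x i s⟫) + (⟪v i s, a i s⟫ + ⟪a i s, v i s⟫)|
          ≤ 2 * (‖x i s‖ * ‖v i s‖) + 2 * (‖v i s‖ * ‖a i s‖) := by
        calc |(⟪x i s, v i s⟫ + ⟪v i s, x i s⟫) + (⟪v i s, a i s⟫ + ⟪a i s, v i s⟫)|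
            ≤ |⟪x i s, v i s⟫| + |⟪v i s, x i s⟫| + (|⟪v i s, a i s⟫| + |⟪a i s, v i s⟫|) := by
              exact (abs_add_le _ _).trans (by gcongr <;> exact abs_add_le _ _)
          _ ≤ 2 * (‖x i s‖ * ‖v i s‖) + 2 * (‖v i s‖ * ‖a i s‖) := by
              nlinarith [hC1, hC2, hC3, hC4]
      nlinarith [habs, hA, sq_nonneg (‖x i s‖ - ‖v i s‖), sq_nonneg (‖v i s‖ - R),
        mul_nonneg hV hAn, sq_nonneg (‖x i s‖ + ‖v i s‖ + R - 2 * ‖v i s‖)]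
    have habsF' : |F' s| ≤ (N : ℝ)⁻¹ * ∑ i, (5 * (‖x i s‖ ^ 2 + ‖v i s‖ ^ 2) + 3 * R ^ 2) := by
      rw [hF'def]
      rw [abs_mul, abs_of_nonneg (le_of_lt (inv_pos.mpr hN0))]
      apply mul_le_mul_of_nonneg_left _ (le_of_lt (inv_pos.mpr hN0))
      exact (Finset.abs_sum_le_sum_abs _ _).trans (Finset.sum_le_sum fun i _ => hterm i)
    have hsplit : (N : ℝ)⁻¹ * ∑ i, (5 * (‖x i s‖ ^ 2 + ‖v i s‖ ^ 2) + 3 * R ^ 2)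
        = 5 * F s + 3 * R ^ 2 := by
      rw [Finset.sum_add_distrib, ← Finset.mul_sum, Finset.sum_const, hFdef]
      simp only [Finset.card_univ, Fintype.card_fin, nsmul_eq_mul]
      field_simp
    rw [Real.norm_eq_abs, Real.norm_eq_abs, abs_of_nonneg (hF0 s)]
    calc |F' s| ≤ 5 * F s + 3 * R ^ 2 := by rw [← hsplit]; exact habsF'
      _ ≤ 5 * F s + 3 * R ^ 2 := le_refl _
  -- apply Gronwall
  have hF0le : ‖F 0‖ ≤ max I0 0 := by
    rw [Real.norm_eq_abs, abs_of_nonneg (hF0 0)]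
    exact le_max_of_le_left hI0
  have hgron := norm_le_gronwallBound_of_norm_deriv_right_le hFcont
    (fun s hs => (hFderiv s (Set.Ico_subset_Icc_self hs)).hasDerivWithinAt)
    hF0le hF'bound t ht
  rw [Real.norm_eq_abs, abs_of_nonneg (hF0 t)] at hgron
  have hC : gronwallBound (max I0 0) 5 (3 * R ^ 2) (t - 0)
      ≤ Real.exp (5 * T) * (max I0 0) + (3 * R ^ 2) / 5 * (Real.exp (5 * T) - 1) := by
    rw [gronwallBound_of_K_ne_0 (by norm_num : (5 : ℝ) ≠ 0)]
    simp only [sub_zero]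
    have h1 : Real.exp (5 * t) ≤ Real.exp (5 * T) := by
      apply Real.exp_le_exp.mpr; nlinarith [ht.2]
    have hI : (0:ℝ) ≤ max I0 0 := le_max_right _ _
    have hε : (0:ℝ) ≤ 3 * R ^ 2 / 5 := by positivity
    have h2 : Real.exp (5 * t) - 1 ≤ Real.exp (5 * T) - 1 := by linarith
    nlinarith [mul_le_mul_of_nonneg_left h1 hI, mul_le_mul_of_nonneg_left h2 hε]
  calc (N : ℝ)⁻¹ * ∑ i, (‖x i t‖ ^ 2 + ‖v i t‖ ^ 2) = F t := rfl
    _ ≤ _ := hgron.trans hC
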